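/- Let c, A, B ∈ ℝ with c > 0, and let h : ℝ → ℝ be C² with h'(s) → 0 as s → ∞ and h(s)/s → 0 as s → ∞. Suppose s·H(s)/log s → −a₃ as s → ∞, where H(s) := h''(s) + (2cs + A h(s) + B)h'(s). Then s² h'(s)/log s → −a₃/(2c) as s → ∞. -/

import Mathlib

open Filter Real

set_option maxHeartbeats 2000000


lemma stmt7_aux1 (a₃ δ ε' u r : ℝ) (hδhalf : δ ≤ 1/2)
    (hu2 : u + a₃ < δ) (hr1 : -δ ≤ r) (hr2 : r ≤ δ)
    (hε'2 : ε'/2 = δ + δ*|a₃|) (hε'pos : 0 < ε') :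
    0 ≤ (-a₃ + ε') * (1 + r) - u := by
  nlinarith [mul_nonneg (by linarith [le_abs_self a₃] : (0:ℝ) ≤ |a₃| - a₃)
      (by linarith : (0:ℝ) ≤ δ + r),
    mul_nonneg (by linarith [neg_abs_le a₃] : (0:ℝ) ≤ |a₃| + a₃)
      (by linarith : (0:ℝ) ≤ δ - r),
    mul_nonneg hε'pos.le (by linarith : (0:ℝ) ≤ 1/2 + r)]

lemma stmt7_aux2 (a₃ δ ε' u r : ℝ) (hδhalf : δ ≤ 1/2)
    (hu1 : -δ < u + a₃) (hr1 : -δ ≤ r) (hr2 : r ≤ δ)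
    (hε'2 : ε'/2 = δ + δ*|a₃|) (hε'pos : 0 < ε') :
    0 ≤ u - (-a₃ - ε') * (1 + r) := by
  nlinarith [mul_nonneg (by linarith [le_abs_self a₃] : (0:ℝ) ≤ |a₃| - a₃)
      (by linarith : (0:ℝ) ≤ δ - r),
    mul_nonneg (by linarith [neg_abs_le a₃] : (0:ℝ) ≤ |a₃| + a₃)
      (by linarith : (0:ℝ) ≤ δ + r),
    mul_nonneg hε'pos.le (by linarith : (0:ℝ) ≤ 1/2 + r)]

theorem stmt_7 (c A B a₃ : ℝ) (hc : 0 < c) (h H : ℝ → ℝ) (hh : ContDiff ℝ 2 h)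
    (hh' : Tendsto (deriv h) atTop (nhds 0))
    (hhs : Tendsto (fun s => h s / s) atTop (nhds 0))
    (hHdef : ∀ s, H s = deriv (deriv h) s + (2 * c * s + A * h s + B) * deriv h s)
    (hH : Tendsto (fun s => s * H s / Real.log s) atTop (nhds (-a₃))) :
    Tendsto (fun s => s ^ 2 * deriv h s / Real.log s) atTop (nhds (-a₃ / (2 * c))) := by
  have hcont : Continuous h := hh.continuous
  have h2 : Differentiable ℝ h ∧ _ ∧ ContDiff ℝ 1 (deriv h) :=
    contDiff_succ_iff_deriv.mp (show ContDiff ℝ (1+1) h by norm_num; exact hh)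
  have hdh : Differentiable ℝ h := h2.1
  have hdh' : Differentiable ℝ (deriv h) := h2.2.2.differentiable one_ne_zero
  set Φ : ℝ → ℝ := fun s => ∫ t in (1:ℝ)..s, h t with hΦdef
  have hΦd : ∀ s : ℝ, HasDerivAt Φ (h s) s := fun s =>
    intervalIntegral.integral_hasDerivAt_right (hcont.intervalIntegrable _ _)
      (hcont.stronglyMeasurableAtFilter _ _) hcont.continuousAt
  set f : ℝ → ℝ := fun s => Real.exp (c*s^2 + A*Φ s + B*s) with hfdef
  have hfpos : ∀ s, 0 < f s := fun s => Real.exp_pos _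
  have hfd : ∀ s : ℝ, HasDerivAt f ((2*c*s + A*h s + B) * f s) s := by
    intro s
    have h1 : HasDerivAt (fun s => c*s^2 + A*Φ s + B*s) (2*c*s + A*h s + B) s := by
      have h2 := (((hasDerivAt_pow 2 s).const_mul c).add ((hΦd s).const_mul A)).add
        ((hasDerivAt_id s).const_mul B)
      refine h2.congr_deriv (Eq.symm ?_); push_cast; ring
    have := h1.exp
    simpa [hfdef, mul_comm] using this
  set ψ : ℝ → ℝ := fun s => f s * deriv h s with hψdef
  have hψd : ∀ s : ℝ, HasDerivAt ψ (f s * H s) s := by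
    intro s
    have := (hfd s).mul ((hdh' s).hasDerivAt)
    rw [hHdef s]
    refine this.congr_deriv (Eq.symm ?_); ring
  set g : ℝ → ℝ := fun s => f s * Real.log s / (2*c*s^2) with hgdef
  set R : ℝ → ℝ := fun s => (A*h s + B)/(2*c*s) + (1 - 2*Real.log s)/(2*c*s^2*Real.log s)
    with hRdef
  have hgd : ∀ s : ℝ, 2 ≤ s → HasDerivAt g ((Real.log s / s) * f s * (1 + R s)) s := by
    intro s hs
    have hs0 : (0:ℝ) < s := by linarith
    have hls : 0 < Real.log s := Real.log_pos (by linarith)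
    have hnum : HasDerivAt (fun s => f s * Real.log s)
        ((2*c*s + A*h s + B) * f s * Real.log s + f s * s⁻¹) s :=
      (hfd s).mul (Real.hasDerivAt_log hs0.ne')
    have hden : HasDerivAt (fun s : ℝ => 2*c*s^2) (2*c*(2*s)) s := by
      simpa using (hasDerivAt_pow 2 s).const_mul (2*c)
    have hd := hnum.div hden (by positivity)
    refine hd.congr_deriv (Eq.symm ?_)
    simp only [hRdef]; field_simp
    ring
  have hR0 : Tendsto R atTop (nhds 0) := by
    have h1 : Tendsto (fun s => (A*(h s/s) + B*(1/s))/(2*c)) atTop (nhds 0) := by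
      have := ((hhs.const_mul A).add ((tendsto_inv_atTop_zero.congr (fun s => (one_div s).symm)).const_mul B)).div_const (2*c)
      simpa using this
    have hlog : Tendsto (fun s : ℝ => 1/Real.log s) atTop (nhds 0) := by
      have := tendsto_inv_atTop_zero.comp Real.tendsto_log_atTop
      simpa [one_div, Function.comp_def] using this
    have hsq : Tendsto (fun s : ℝ => 1/(2*c*s^2)) atTop (nhds 0) := by
      have hsq' : Tendsto (fun s : ℝ => 2*c*s^2) atTop atTop := by
        exact (tendsto_pow_atTop (by norm_num)).const_mul_atTop (by positivity)
      have h3 := tendsto_inv_atTop_zero.comp hsq'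
      apply h3.congr
      intro s; simp [one_div, Function.comp]
    have h2 : Tendsto (fun s => (1/Real.log s - 2) * (1/(2*c*s^2))) atTop (nhds 0) := by
      have := (hlog.sub_const 2).mul hsq
      simpa using this
    have hsum := h1.add h2
    rw [add_zero] at hsum
    apply hsum.congr'
    filter_upwards [eventually_ge_atTop (2:ℝ)] with s hs
    have hs0 : (0:ℝ) < s := by linarith
    have hls : 0 < Real.log s := Real.log_pos (by linarith)
    rw [hRdef]
    field_simp
  -- lower bound on Φ and g → atTop
  have hgtop : Tendsto g atTop atTop := by
    set δA := c/(2*(|A|+1)) with hδA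
    have hδApos : 0 < δA := by positivity
    obtain ⟨z₀, hz₀2, hz₀⟩ : ∃ z₀ : ℝ, 2 ≤ z₀ ∧ ∀ z ≥ z₀, |h z| ≤ δA * z := by
      have h1 := (Metric.tendsto_nhds.mp hhs) δA hδApos
      rcases (h1.and (eventually_ge_atTop (2:ℝ))).exists_forall_of_atTop with ⟨z₀, hz⟩
      refine ⟨max z₀ 2, le_max_right _ _, fun z hz' => ?_⟩
      have h2 := hz z (le_trans (le_max_left _ _) hz')
      have hzpos : (0:ℝ) < z := by have := le_trans (le_max_right _ _) hz'; linarith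
      have h3 : |h z| / |z| < δA := by simpa [Real.dist_eq, abs_div] using h2.1
      rw [abs_of_pos hzpos] at h3
      calc |h z| = |h z| / z * z := by field_simp
        _ ≤ δA * z := by nlinarith [abs_nonneg (h z)]
    have hΦbd : ∀ s ≥ z₀, |Φ s| ≤ |Φ z₀| + δA * s^2 / 2 := by
      intro s hs
      have hint : Φ s - Φ z₀ = ∫ t in z₀..s, h t := by
        have hadd := intervalIntegral.integral_add_adjacent_intervals
          (μ := MeasureTheory.volume) (hcont.intervalIntegrable 1 z₀)
          (hcont.intervalIntegrable z₀ s)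
        have e1 : Φ s = ∫ t in (1:ℝ)..s, h t := rfl
        have e2 : Φ z₀ = ∫ t in (1:ℝ)..z₀, h t := rfl
        rw [e1, e2, ← hadd]; ring
      have hb1 : |∫ t in z₀..s, h t| ≤ ∫ t in z₀..s, |h t| :=
        intervalIntegral.abs_integral_le_integral_abs hs
      have hb2 : (∫ t in z₀..s, |h t|) ≤ ∫ t in z₀..s, δA * t := by
        apply intervalIntegral.integral_mono_on hs
          (hcont.abs.intervalIntegrable _ _)
          ((continuous_const.mul continuous_id).intervalIntegrable _ _)
        intro x hx
        exact hz₀ x hx.1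
      have hb3 : (∫ t in z₀..s, δA * t) = δA * (s^2 - z₀^2)/2 := by
        rw [intervalIntegral.integral_const_mul, integral_id]; ring
      have : |Φ s - Φ z₀| ≤ δA * s^2 / 2 := by
        rw [hint]
        refine le_trans hb1 (le_trans hb2 ?_)
        rw [hb3]
        nlinarith [sq_nonneg z₀, hδApos]
      calc |Φ s| ≤ |Φ z₀| + |Φ s - Φ z₀| := by
            have := abs_sub_abs_le_abs_sub (Φ s) (Φ z₀); linarith [abs_sub_comm (Φ s) (Φ z₀)]
        _ ≤ |Φ z₀| + δA * s^2 / 2 := by linarith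
    set K : ℝ := |A| * |Φ z₀| + Real.log (2*c) with hK
    set ℓ : ℝ → ℝ := fun s => 3*c/4*s^2 - (|B|+2)*s - K with hℓ
    have hℓtop : Tendsto ℓ atTop atTop := by
      have h1 : Tendsto (fun s : ℝ => s * (3*c/4*s - (|B|+2))) atTop atTop :=
        tendsto_id.atTop_mul_atTop₀ (tendsto_atTop_add_const_right _ _
          (tendsto_id.const_mul_atTop (by positivity)))
      have h2 := tendsto_atTop_add_const_right atTop (-K) h1
      apply h2.congr
      intro s; simp [hℓ]; ring
    apply tendsto_atTop_mono' _ _ (Real.tendsto_exp_atTop.comp hℓtop)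
    filter_upwards [eventually_ge_atTop z₀, eventually_ge_atTop (3:ℝ)] with s hsz hs3
    have hs0 : (0:ℝ) < s := by linarith
    have hls1 : 1 ≤ Real.log s := by
      rw [show (1:ℝ) = Real.log (Real.exp 1) by simp]
      exact Real.log_le_log (Real.exp_pos 1) (by
        have := Real.exp_one_lt_d9; linarith)
    have hAΦ : A * Φ s ≥ -(|A| * (|Φ z₀| + δA * s^2/2)) := by
      have h1 : A * Φ s ≥ -(|A * Φ s|) := neg_abs_le _
      have h2 : |A * Φ s| ≤ |A| * (|Φ z₀| + δA * s^2/2) := by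
        rw [abs_mul]
        exact mul_le_mul_of_nonneg_left (hΦbd s hsz) (abs_nonneg A)
      linarith
    have hAδ : |A| * δA / 2 ≤ c/4 := by
      have h1A : (0:ℝ) < |A| + 1 := by positivity
      have heq : |A| * (c/(2*(|A|+1)))/2 = (|A|/(|A|+1)) * (c/4) := by
        rw [div_mul_div_comm]; rw [div_eq_div_iff (by positivity) (by positivity)]
        field_simp
        ring
      rw [hδA, heq]
      have hle1 : |A|/(|A|+1) ≤ 1 := by rw [div_le_one h1A]; linarith
      nlinarith [hc.le, abs_nonneg A, div_nonneg (abs_nonneg A) h1A.le]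
    have hBs : B * s ≥ -(|B| * s) := by
      have := neg_abs_le (B * s)
      rw [abs_mul, abs_of_pos hs0] at this
      linarith
    have hφlb : c*s^2 + A*Φ s + B*s ≥ 3*c/4*s^2 - |B| * s - |A| * |Φ z₀| := by
      have h3 : |A| * (δA * s^2/2) ≤ c/4 * s^2 := by
        have := mul_le_mul_of_nonneg_right hAδ (sq_nonneg s)
        nlinarith
      nlinarith
    have hgs : g s ≥ Real.exp (ℓ s) := by
      have hg1 : g s = Real.exp (c*s^2 + A*Φ s + B*s) * Real.log s / (2*c*s^2) := rfl
      have hexp : g s = Real.exp (c*s^2 + A*Φ s + B*s - Real.log (2*c) - 2*Real.log s)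
          * Real.log s := by
        rw [hg1, Real.exp_sub, Real.exp_sub]
        rw [Real.exp_log (by positivity : (0:ℝ) < 2*c)]
        rw [show (2:ℝ)*Real.log s = Real.log (s^2) by rw [Real.log_pow]; push_cast; ring]
        rw [Real.exp_log (by positivity : (0:ℝ) < s^2)]
        field_simp
      rw [hexp]
      have hlog_le : Real.log s ≤ s := le_trans (Real.log_le_sub_one_of_pos hs0) (by linarith)
      have harg : ℓ s ≤ c*s^2 + A*Φ s + B*s - Real.log (2*c) - 2*Real.log s := by
        rw [hℓ, hK]
        have : 2*Real.log s ≤ 2*s := by linarith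
        nlinarith
      calc Real.exp (ℓ s) = Real.exp (ℓ s) * 1 := by ring
        _ ≤ Real.exp (c*s^2 + A*Φ s + B*s - Real.log (2*c) - 2*Real.log s) * Real.log s := by
            apply mul_le_mul (Real.exp_le_exp.mpr harg) hls1 (by norm_num) (Real.exp_pos _).le
    simpa [Function.comp] using hgs
  -- main squeeze argument
  rw [Metric.tendsto_nhds]
  intro ε hε
  set δ : ℝ := min (1/2) (c*ε/(2*(1+|a₃|))) with hδdef
  have hδpos : 0 < δ := lt_min (by norm_num) (by positivity)
  have hδhalf : δ ≤ 1/2 := min_le_left _ _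
  set ε' : ℝ := 2*δ*(1+|a₃|) with hε'def
  have hε'pos : 0 < ε' := by positivity
  have ha₃1 : (0:ℝ) < 1 + |a₃| := by positivity
  have hε'le : ε' ≤ c*ε := by
    have hδ2 : δ ≤ c*ε/(2*(1+|a₃|)) := min_le_right _ _
    have h1 : 2*(c*ε/(2*(1+|a₃|)))*(1+|a₃|) = c*ε := by field_simp
    rw [hε'def]
    nlinarith
  have hHev : ∀ᶠ z in atTop, |z * H z / Real.log z + a₃| < δ := by
    have h1 := (Metric.tendsto_nhds.mp hH) δ hδpos
    filter_upwards [h1] with z hz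
    simpa [Real.dist_eq, sub_neg_eq_add] using hz
  have hRev : ∀ᶠ z in atTop, |R z| ≤ δ := by
    have h1 := (Metric.tendsto_nhds.mp hR0) δ hδpos
    filter_upwards [h1] with z hz
    have := hz.le
    simpa [Real.dist_eq] using this
  obtain ⟨s₀, hs₀⟩ := eventually_atTop.mp (hHev.and hRev)
  set s₁ := max s₀ 2 with hs₁def
  have hs₁2 : (2:ℝ) ≤ s₁ := le_max_right _ _
  have hcond : ∀ z, s₁ ≤ z → |z * H z / Real.log z + a₃| < δ ∧ |R z| ≤ δ :=
    fun z hz => hs₀ z (le_trans (le_max_left _ _) hz)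
  -- derivative sign facts
  have hDpos : ∀ z, s₁ ≤ z →
      (0 ≤ (-a₃+ε') * (Real.log z / z * f z * (1 + R z)) - f z * H z
      ∧ 0 ≤ f z * H z - (-a₃-ε') * (Real.log z / z * f z * (1 + R z))) := by
    intro z hz
    obtain ⟨hu, hr⟩ := hcond z hz
    have hz2 : (2:ℝ) ≤ z := le_trans hs₁2 hz
    have hz0 : (0:ℝ) < z := by linarith
    have hlz : 0 < Real.log z := Real.log_pos (by linarith)
    have hLF : 0 < Real.log z / z * f z := mul_pos (div_pos hlz hz0) (hfpos z)
    have hHz : f z * H z = Real.log z / z * f z * (z * H z / Real.log z) := by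
      field_simp
    obtain ⟨hu1, hu2⟩ := abs_lt.mp hu
    obtain ⟨hr1, hr2⟩ := abs_le.mp hr
    have hε'2 : ε'/2 = δ + δ*|a₃| := by rw [hε'def]; ring
    constructor
    · rw [hHz]
      have hbr : 0 ≤ (-a₃+ε') * (1 + R z) - (z * H z / Real.log z) :=
        stmt7_aux1 a₃ δ ε' _ _ hδhalf hu2 hr1 hr2 hε'2 hε'pos
      calc (0:ℝ) ≤ Real.log z / z * f z * ((-a₃+ε') * (1 + R z) - z * H z / Real.log z) :=
            mul_nonneg hLF.le hbr
        _ = (-a₃+ε') * (Real.log z / z * f z * (1 + R z))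
            - Real.log z / z * f z * (z * H z / Real.log z) := by ring
    · rw [hHz]
      have hbr : 0 ≤ (z * H z / Real.log z) - (-a₃-ε') * (1 + R z) :=
        stmt7_aux2 a₃ δ ε' _ _ hδhalf hu1 hr1 hr2 hε'2 hε'pos
      calc (0:ℝ) ≤ Real.log z / z * f z * (z * H z / Real.log z - (-a₃-ε') * (1 + R z)) :=
            mul_nonneg hLF.le hbr
        _ = Real.log z / z * f z * (z * H z / Real.log z)
            - (-a₃-ε') * (Real.log z / z * f z * (1 + R z)) := by ring
  -- monotonicity
  have hmono1 : MonotoneOn (fun z => (-a₃+ε') * g z - ψ z) (Set.Ici s₁) := by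
    have hder : ∀ z ∈ Set.Ici s₁, HasDerivAt (fun z => (-a₃+ε') * g z - ψ z)
        ((-a₃+ε') * (Real.log z / z * f z * (1 + R z)) - f z * H z) z := fun z hz =>
      ((hgd z (le_trans hs₁2 hz)).const_mul _).sub (hψd z)
    apply monotoneOn_of_deriv_nonneg (convex_Ici s₁)
    · exact fun z hz => (hder z hz).continuousAt.continuousWithinAt
    · intro z hz
      rw [interior_Ici] at hz
      exact (hder z (Set.Ioi_subset_Ici_self hz)).differentiableAt.differentiableWithinAt
    · intro z hz
      rw [interior_Ici] at hz
      rw [(hder z (Set.Ioi_subset_Ici_self hz)).deriv]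
      exact (hDpos z (le_of_lt hz)).1
  have hmono2 : MonotoneOn (fun z => ψ z - (-a₃-ε') * g z) (Set.Ici s₁) := by
    have hder : ∀ z ∈ Set.Ici s₁, HasDerivAt (fun z => ψ z - (-a₃-ε') * g z)
        (f z * H z - (-a₃-ε') * (Real.log z / z * f z * (1 + R z))) z := fun z hz =>
      (hψd z).sub ((hgd z (le_trans hs₁2 hz)).const_mul _)
    apply monotoneOn_of_deriv_nonneg (convex_Ici s₁)
    · exact fun z hz => (hder z hz).continuousAt.continuousWithinAt
    · intro z hz
      rw [interior_Ici] at hz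
      exact (hder z (Set.Ioi_subset_Ici_self hz)).differentiableAt.differentiableWithinAt
    · intro z hz
      rw [interior_Ici] at hz
      rw [(hder z (Set.Ioi_subset_Ici_self hz)).deriv]
      exact (hDpos z (le_of_lt hz)).2
  set Cp : ℝ := (-a₃+ε') * g s₁ - ψ s₁ with hCp
  set Cm : ℝ := ψ s₁ - (-a₃-ε') * g s₁ with hCm
  have hub : ∀ s, s₁ ≤ s → ψ s ≤ (-a₃+ε') * g s - Cp := by
    intro s hs
    have := hmono1 Set.self_mem_Ici hs hs
    simp only at this
    linarith
  have hlb : ∀ s, s₁ ≤ s → (-a₃-ε') * g s + Cm ≤ ψ s := by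
    intro s hs
    have := hmono2 Set.self_mem_Ici hs hs
    simp only at this
    linarith
  set M : ℝ := (2*(|Cp|+|Cm|)+1)/(c*ε) with hM
  have hMc : c*ε*M = 2*(|Cp|+|Cm|)+1 := by rw [hM]; field_simp
  filter_upwards [eventually_ge_atTop s₁, hgtop.eventually_ge_atTop M] with s hss hgM
  have hs2 : (2:ℝ) ≤ s := le_trans hs₁2 hss
  have hs0 : (0:ℝ) < s := by linarith
  have hlogs : 0 < Real.log s := Real.log_pos (by linarith)
  have hG : 0 < g s := by
    have : g s = f s * Real.log s / (2*c*s^2) := rfl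
    rw [this]; positivity
  set G : ℝ := g s with hGdef
  have h2cG : 0 < 2*c*G := by positivity
  have hid : s^2 * deriv h s / Real.log s = ψ s / (2*c*G) := by
    have h1 : ψ s = f s * deriv h s := rfl
    have h2 : G = f s * Real.log s / (2*c*s^2) := rfl
    rw [h1, h2]
    rw [div_eq_div_iff hlogs.ne' (by positivity)]
    field_simp
  rw [Real.dist_eq, hid]
  have hsub : ψ s / (2*c*G) - (-a₃/(2*c)) = (ψ s + a₃*G)/(2*c*G) := by
    field_simp
    ring
  rw [hsub, abs_lt]
  have hup2 : ψ s + a₃*G ≤ ε'*G + |Cp| := by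
    have h1 := hub s hss
    have h2 : -Cp ≤ |Cp| := neg_le_abs Cp
    nlinarith
  have hlo2 : -(ε'*G) - |Cm| ≤ ψ s + a₃*G := by
    have h1 := hlb s hss
    have h2 : Cm ≥ -|Cm| := neg_abs_le Cm
    nlinarith
  have hε'G : ε'*G ≤ ε/2 * (2*c*G) := by nlinarith
  have hCpb : |Cp| ≤ ε/4 * (2*c*G) := by nlinarith [abs_nonneg Cp, abs_nonneg Cm]
  have hCmb : |Cm| ≤ ε/4 * (2*c*G) := by nlinarith [abs_nonneg Cp, abs_nonneg Cm]
  constructor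
  · rw [neg_lt, ← neg_div]
    rw [div_lt_iff₀ h2cG]
    nlinarith
  · rw [div_lt_iff₀ h2cG]
    nlinarith
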